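/- Let W : ℝ → ℝ be continuous, nonnegative, with W > 0 on (−1,1) and W(±1)=0. Let u ∈ H^1(a,b), ε > 0, and suppose there exist points a ≤ x₁ < x₂ ≤ b with u(x₁) ≤ −1 and u(x₂) ≥ 1. Then ∫_{x₁}^{x₂} [ (ε/2) u_x² + W(u)/ε ] dx ≥ c₀, where c₀ = ∫_{−1}^1 √(2W(s)) ds. -/

import Mathlib

open MeasureTheory intervalIntegral

theorem stmt12 (a b x₁ x₂ ε : ℝ) (hε : 0 < ε) (hax : a ≤ x₁) (hx : x₁ < x₂) (hxb : x₂ ≤ b)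
    (W : ℝ → ℝ) (hWc : Continuous W) (hWnn : ∀ s, 0 ≤ W s)
    (hWpos : ∀ s ∈ Set.Ioo (-1:ℝ) 1, 0 < W s) (hW1 : W 1 = 0) (hWm1 : W (-1) = 0)
    (u u' : ℝ → ℝ) (hu : ∀ x ∈ Set.Icc a b, HasDerivAt u (u' x) x)
    (hint : IntervalIntegrable (fun x => ε / 2 * (u' x) ^ 2 + W (u x) / ε)
      MeasureTheory.volume x₁ x₂)
    (h1 : u x₁ ≤ -1) (h2 : 1 ≤ u x₂) :
    (∫ s in (-1:ℝ)..1, Real.sqrt (2 * W s)) ≤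
      ∫ x in x₁..x₂, (ε / 2 * (u' x) ^ 2 + W (u x) / ε) := by
  set φ : ℝ → ℝ := fun s => Real.sqrt (2 * W (max (-1) (min 1 s))) with hφ_def
  have hφc : Continuous φ := by
    apply Real.continuous_sqrt.comp
    exact continuous_const.mul (hWc.comp (continuous_const.max (continuous_const.min continuous_id)))
  have hφnn : ∀ s, 0 ≤ φ s := fun s => Real.sqrt_nonneg _
  -- φ s ≤ √(2 W s)
  have hφle : ∀ s, φ s ≤ Real.sqrt (2 * W s) := by
    intro s
    rcases le_or_gt s (-1) with h | h
    · have : min 1 s = s := min_eq_right (by linarith)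
      rw [hφ_def]
      simp only [this]
      rw [max_eq_left (by linarith), hWm1]
      simpa using Real.sqrt_nonneg _
    rcases le_or_gt s 1 with h' | h'
    · have h1' : min 1 s = s := min_eq_right h'
      have h2' : max (-1) s = s := max_eq_right h.le
      rw [hφ_def]; simp only [h1', h2']; exact le_refl _
    · have : min 1 s = 1 := min_eq_left h'.le
      rw [hφ_def]
      simp only [this]
      rw [max_eq_right (by norm_num : (-1:ℝ) ≤ 1), hW1]
      simpa using Real.sqrt_nonneg _
  -- pointwise Young inequality
  have hyoung : ∀ x, φ (u x) * u' x ≤ ε / 2 * (u' x) ^ 2 + W (u x) / ε := by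
    intro x
    have h0 : φ (u x) * u' x ≤ Real.sqrt (2 * W (u x)) * |u' x| := by
      calc φ (u x) * u' x ≤ φ (u x) * |u' x| :=
            mul_le_mul_of_nonneg_left (le_abs_self _) (hφnn _)
        _ ≤ Real.sqrt (2 * W (u x)) * |u' x| :=
            mul_le_mul_of_nonneg_right (hφle _) (abs_nonneg _)
    refine h0.trans ?_
    set s := Real.sqrt (2 * W (u x)) with hs
    have hW0 : 0 ≤ W (u x) := hWnn (u x)
    have hs2 : s ^ 2 = 2 * W (u x) := Real.sq_sqrt (by linarith)
    have hsnn : 0 ≤ s := Real.sqrt_nonneg _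
    rw [← mul_le_mul_iff_right₀ hε]
    have heq : ε * (ε / 2 * u' x ^ 2 + W (u x) / ε) = ε ^ 2 / 2 * u' x ^ 2 + W (u x) := by
      field_simp
    rw [heq]
    nlinarith [sq_nonneg (ε * |u' x| - s), sq_abs (u' x), abs_nonneg (u' x)]
  -- primitive G
  set G : ℝ → ℝ := fun t => ∫ s in (-1:ℝ)..t, φ s with hG_def
  have hGderiv : ∀ t, HasDerivAt G (φ t) t := by
    intro t
    exact intervalIntegral.integral_hasDerivAt_right
      (hφc.intervalIntegrable _ _)
      (hφc.stronglyMeasurableAtFilter _ _)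
      hφc.continuousAt
  have hGmono : Monotone G := by
    intro t₁ t₂ h
    have : G t₂ - G t₁ = ∫ s in t₁..t₂, φ s := by
      rw [hG_def]
      exact intervalIntegral.integral_interval_sub_left
        (hφc.intervalIntegrable _ _) (hφc.intervalIntegrable _ _)
    have hnn : 0 ≤ ∫ s in t₁..t₂, φ s :=
      intervalIntegral.integral_nonneg h (fun x _ => hφnn x)
    linarith
  have hsub : Set.Icc x₁ x₂ ⊆ Set.Icc a b := Set.Icc_subset_Icc hax hxb
  -- derivative of G ∘ u
  have hcomp : ∀ x ∈ Set.Icc x₁ x₂, HasDerivAt (G ∘ u) (φ (u x) * u' x) x := by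
    intro x hx'
    exact (hGderiv (u x)).comp x (hu x (hsub hx'))
  -- integrability of φ(u x) * u' x
  have humeas : AEStronglyMeasurable (fun x => φ (u x) * u' x)
      (volume.restrict (Set.uIoc x₁ x₂)) := by
    have huIoc : Set.uIoc x₁ x₂ = Set.Ioc x₁ x₂ := Set.uIoc_of_le hx.le
    rw [huIoc]
    have hu_cont : ContinuousOn u (Set.Icc a b) := fun x hx' =>
      (hu x hx').continuousAt.continuousWithinAt
    have hmono : volume.restrict (Set.Ioc x₁ x₂) ≤ volume.restrict (Set.Icc a b) :=
      Measure.restrict_mono (fun x hx' => hsub (Set.Ioc_subset_Icc_self hx')) le_rfl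
    have h1m : AEStronglyMeasurable u (volume.restrict (Set.Icc a b)) :=
      hu_cont.aestronglyMeasurable measurableSet_Icc
    have h2m : AEStronglyMeasurable (fun x => φ (u x)) (volume.restrict (Set.Ioc x₁ x₂)) :=
      (hφc.comp_aestronglyMeasurable (h1m.mono_measure hmono))
    have h3m : AEStronglyMeasurable (fun x => φ (u x) * deriv u x)
        (volume.restrict (Set.Ioc x₁ x₂)) :=
      h2m.mul (measurable_deriv u).aestronglyMeasurable
    refine h3m.congr ?_
    refine Filter.eventuallyEq_of_mem (self_mem_ae_restrict measurableSet_Ioc) ?_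
    intro x hx'
    have hd := (hu x (hsub (Set.Ioc_subset_Icc_self hx'))).deriv
    simp only [hd]
  have henergy_nn : ∀ x, 0 ≤ ε / 2 * (u' x) ^ 2 + W (u x) / ε := by
    intro x
    have hW0 : 0 ≤ W (u x) := hWnn (u x)
    positivity
  have hbound : ∀ x, |φ (u x) * u' x| ≤ |ε / 2 * (u' x) ^ 2 + W (u x) / ε| := by
    intro x
    rw [abs_mul, abs_of_nonneg (hφnn _), abs_of_nonneg (henergy_nn x)]
    calc φ (u x) * |u' x| ≤ Real.sqrt (2 * W (u x)) * |u' x| :=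
          mul_le_mul_of_nonneg_right (hφle _) (abs_nonneg _)
      _ ≤ ε / 2 * |u' x| ^ 2 + W (u x) / ε := by
          have := hyoung x
          -- redo young with |u' x| in place of u' x
          set s := Real.sqrt (2 * W (u x)) with hs
          have hW0 : 0 ≤ W (u x) := hWnn (u x)
          have hs2 : s ^ 2 = 2 * W (u x) := Real.sq_sqrt (by linarith)
          have hsnn : 0 ≤ s := Real.sqrt_nonneg _
          rw [← mul_le_mul_iff_right₀ hε]
          have heq : ε * (ε / 2 * |u' x| ^ 2 + W (u x) / ε) = ε ^ 2 / 2 * |u' x| ^ 2 + W (u x) := by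
            field_simp
          rw [heq]
          nlinarith [sq_nonneg (ε * |u' x| - s), abs_nonneg (u' x)]
      _ = ε / 2 * (u' x) ^ 2 + W (u x) / ε := by rw [sq_abs]
  have hder_int : IntervalIntegrable (fun x => φ (u x) * u' x) volume x₁ x₂ :=
    hint.mono_fun humeas (Filter.Eventually.of_forall hbound)
  -- FTC
  have hFTC : ∫ x in x₁..x₂, φ (u x) * u' x = G (u x₂) - G (u x₁) := by
    have huIcc : Set.uIcc x₁ x₂ = Set.Icc x₁ x₂ := Set.uIcc_of_le hx.le
    have := intervalIntegral.integral_eq_sub_of_hasDerivAt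
      (f := G ∘ u) (f' := fun x => φ (u x) * u' x)
      (by rw [huIcc]; exact hcomp) hder_int
    simpa using this
  -- c₀ = G 1
  have hc₀ : (∫ s in (-1:ℝ)..1, Real.sqrt (2 * W s)) = G 1 := by
    rw [hG_def]
    apply intervalIntegral.integral_congr
    intro s hs
    rw [Set.uIcc_of_le (by norm_num : (-1:ℝ) ≤ 1)] at hs
    have h1' : min 1 s = s := min_eq_right hs.2
    have h2' : max (-1) s = s := max_eq_right hs.1
    rw [hφ_def]
    simp only [h1', h2']
  have hGm1 : G (-1) = 0 := by rw [hG_def]; simp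
  have hstep1 : G 1 ≤ G (u x₂) := hGmono h2
  have hstep2 : G (u x₁) ≤ G (-1) := hGmono h1
  have hmain : ∫ x in x₁..x₂, φ (u x) * u' x ≤
      ∫ x in x₁..x₂, (ε / 2 * (u' x) ^ 2 + W (u x) / ε) :=
    intervalIntegral.integral_mono_on hx.le hder_int hint (fun x _ => hyoung x)
  rw [hc₀]
  linarith [hFTC ▸ hmain]
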